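/- Let r, s ∈ ℕ and let k = (k_1, …, k_r) ∈ ℕ^r with k_1 + … + k_r ≤ s. Then there exist rational coefficients β_a, indexed by tuples a = (a_1, …, a_r) ∈ {1, …, s+1}^r, such that for every tuple n = (n_1, …, n_r) ∈ ℕ^r with n_1 + … + n_r ≤ s: Σ_a β_a · Π_{i=1}^r a_i^{n_i} equals 1 if n = k and equals 0 otherwise. -/

import Mathlib

open Finset

lemma one_dim_interp (s k : ℕ) (hk : k ≤ s) :
    ∃ γ : ℕ → ℚ, ∀ n ≤ s,
      ∑ a ∈ Finset.Icc 1 (s + 1), γ a * (a : ℚ) ^ n = if n = k then 1 else 0 := by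
  set V : Matrix (Fin (s + 1)) (Fin (s + 1)) ℚ :=
    Matrix.vandermonde (fun a => (a : ℚ) + 1) with hV
  have hinj : Function.Injective (fun a : Fin (s + 1) => (a : ℚ) + 1) := by
    intro a b h
    simpa [Fin.ext_iff] using h
  have hdet : V.det ≠ 0 := by
    rw [hV, Matrix.det_vandermonde_ne_zero_iff]
    exact hinj
  have hVinv : V⁻¹ * V = 1 := Matrix.nonsing_inv_mul V (isUnit_iff_ne_zero.mpr hdet)
  set e : Fin (s + 1) → ℚ := Pi.single (⟨k, by omega⟩ : Fin (s + 1)) 1 with he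
  set γf : Fin (s + 1) → ℚ := Matrix.vecMul e V⁻¹ with hγf
  have key : Matrix.vecMul γf V = e := by
    rw [hγf, Matrix.vecMul_vecMul, hVinv, Matrix.vecMul_one]
  set γn : ℕ → ℚ := fun i => if h : i < s + 1 then γf ⟨i, h⟩ else 0 with hγn
  refine ⟨fun a => γn (a - 1), ?_⟩
  intro n hn
  have hsum : ∑ a ∈ Finset.Icc 1 (s + 1), γn (a - 1) * (a : ℚ) ^ n
      = ∑ j : Fin (s + 1), γf j * V j ⟨n, by omega⟩ := by
    rw [← Finset.Ico_add_one_right_eq_Icc, Finset.sum_Ico_eq_sum_range]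
    simp only [show s + 1 + 1 - 1 = s + 1 from rfl]
    trans ∑ i ∈ Finset.range (s + 1), γn i * ((i : ℚ) + 1) ^ n
    · refine Finset.sum_congr rfl fun i hi => ?_
      congr 1
      · congr 1
        omega
      · push_cast
        ring_nf
    · rw [← Fin.sum_univ_eq_sum_range (fun j => γn j * ((j : ℚ) + 1) ^ n) (s + 1)]
      refine Finset.sum_congr rfl fun j _ => ?_
      simp [hγn, hV, Matrix.vandermonde, j.isLt]
      exact fun h => absurd j.isLt (by omega)
  rw [hsum]
  have := congrFun key ⟨n, by omega⟩
  rw [Matrix.vecMul, dotProduct] at this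
  rw [this, he, Pi.single_apply]
  simp [Fin.ext_iff]

/-- Multivariate polynomial interpolation underlying cardinality filters: for all
`r, s ∈ ℕ` and every exponent tuple `k` of total degree at most `s`, there exist
rational coefficients `β_a`, indexed by tuples `a ∈ {1, …, s+1}^r`, such that for
every tuple `n` of total degree at most `s`, the combination
`Σ_a β_a · Π_i a_i^{n_i}` equals `1` if `n = k` and `0` otherwise. -/
theorem interpolation_cardinality_filter (r s : ℕ) (k : Fin r → ℕ)
    (hk : ∑ i, k i ≤ s) :
    ∃ β : (Fin r → ℕ) → ℚ,
      ∀ n : Fin r → ℕ, ∑ i, n i ≤ s →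
        (∑ a ∈ Fintype.piFinset (fun _ : Fin r => Finset.Icc 1 (s + 1)),
            β a * ∏ i, (a i : ℚ) ^ (n i)) =
          if n = k then 1 else 0 := by
  have hki : ∀ i, k i ≤ s := fun i =>
    le_trans (Finset.single_le_sum (f := k) (fun _ _ => Nat.zero_le _) (Finset.mem_univ i)) hk
  choose γ hγ using fun i => one_dim_interp s (k i) (hki i)
  refine ⟨fun a => ∏ i, γ i (a i), ?_⟩
  intro n hn
  have hni : ∀ i, n i ≤ s := fun i =>
    le_trans (Finset.single_le_sum (f := n) (fun _ _ => Nat.zero_le _) (Finset.mem_univ i)) hn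
  have h1 : (∑ a ∈ Fintype.piFinset (fun _ : Fin r => Finset.Icc 1 (s + 1)),
      (∏ i, γ i (a i)) * ∏ i, (a i : ℚ) ^ (n i))
      = ∏ i, ∑ x ∈ Finset.Icc 1 (s + 1), γ i x * (x : ℚ) ^ (n i) := by
    rw [Finset.prod_univ_sum]
    refine Finset.sum_congr rfl fun a _ => ?_
    rw [← Finset.prod_mul_distrib]
  rw [h1]
  have h2 : ∀ i, ∑ x ∈ Finset.Icc 1 (s + 1), γ i x * (x : ℚ) ^ (n i)
      = if n i = k i then 1 else 0 := fun i => hγ i (n i) (hni i)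
  simp only [h2]
  by_cases hnk : n = k
  · subst hnk
    simp
  · rw [if_neg hnk]
    obtain ⟨i, hi⟩ : ∃ i, n i ≠ k i := by
      by_contra h
      push_neg at h
      exact hnk (funext h)
    exact Finset.prod_eq_zero (Finset.mem_univ i) (if_neg hi)
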